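/- arXiv:1809.08796 — 2 statements merged into one kernel-verified Lean document; each statement's English description precedes it below -/
import Mathlib

section
/- Under Notation (*): if (J(H')^s : m) = p and (J(H̃)^s : m) ≠ p, then there exists a monomial m_0 ∉ p such that (J(H)^s : m·m_0) = p + (y); in particular p + (y) is an associated prime of J(H)^s. -/
open MvPolynomial

noncomputable section

/-- A finite simple hypergraph on a vertex set `V`: edges are nonempty subsets of `V`
forming an antichain (a clutter). -/
structure SimpleHypergraph (σ : Type*) where
  V : Finset σ
  E : Finset (Finset σ)
  edge_sub : ∀ e ∈ E, e ⊆ V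
  edge_nonempty : ∀ e ∈ E, e.Nonempty
  simple : ∀ e ∈ E, ∀ f ∈ E, e ⊆ f → e = f

/-- The prime ideal generated by the variables indexed by `e`. -/
def primeOf {σ : Type*} (K : Type*) [Field K] (e : Finset σ) : Ideal (MvPolynomial σ K) :=
  Ideal.span ((fun i => (X i : MvPolynomial σ K)) '' e)

/-- The cover ideal of a set of edges: the intersection of the edge primes. -/
def coverIdeal {σ : Type*} (K : Type*) [Field K] (E : Finset (Finset σ)) :
    Ideal (MvPolynomial σ K) :=
  ⨅ e ∈ E, primeOf K e

/-- The squarefree monomial supported on `T`. -/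
def xU {σ : Type*} (K : Type*) [Field K] (T : Finset σ) : MvPolynomial σ K :=
  ∏ i ∈ T, X i
/-- `T` is a vertex cover of the edge set `E`. -/
def IsCover {σ : Type*} (E : Finset (Finset σ)) (T : Finset σ) : Prop :=
  ∀ e ∈ E, ∃ v ∈ e, v ∈ T

/-- `T` is a minimal vertex cover of the edge set `E`. -/
def IsMinimalCover {σ : Type*} (E : Finset (Finset σ)) (T : Finset σ) : Prop :=
  IsCover E T ∧ ∀ T' ⊂ T, ¬ IsCover E T'

/-- `m` is a minimal monomial generator of the monomial ideal `I`: it lies in `I`, and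
every divisor of `m` lying in `I` is associated to `m`. -/
def IsMinMonGen {σ K : Type*} [Field K] (I : Ideal (MvPolynomial σ K))
    (m : MvPolynomial σ K) : Prop :=
  m ∈ I ∧ ∀ d : MvPolynomial σ K, d ∣ m → d ∈ I → Associated d m

/-- `(V', E')` is a shadow of the hypergraph `H`. -/
def IsShadow {σ : Type*} [DecidableEq σ] (H : SimpleHypergraph σ) (V' : Finset σ) (E' : Finset (Finset σ)) : Prop :=
  V' ⊆ H.V ∧ (∀ e ∈ E', e ⊆ V') ∧ (∀ e ∈ E', e.Nonempty) ∧
    (∀ e ∈ E', ∀ f ∈ E', e ⊆ f → e = f) ∧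
    E'.card = H.E.card ∧ ∀ e ∈ H.E, e ∩ V' ∈ E'

/-- The cover ideal of a hypergraph on vertex set `V'` (edges `E'`, subsets of `V'`),
as an ideal of the small polynomial ring `K[V']`. -/
def smallCover {σ : Type*} [DecidableEq σ] (K : Type*) [Field K] (V' : Finset σ)
    (E' : Finset (Finset σ)) : Ideal (MvPolynomial {x : σ // x ∈ V'} K) :=
  ⨅ e ∈ E', primeOf K (e.subtype (· ∈ V'))

/-- `(V', E')` is an odd cycle graph `C_{2n+1}` for some positive `n`. -/
def IsOddCycle {σ : Type*} [DecidableEq σ] (V' : Finset σ) (E' : Finset (Finset σ)) : Prop :=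
  ∃ n : ℕ, 0 < n ∧ ∃ f : Fin (2 * n + 1) → σ, Function.Injective f ∧
    V' = Finset.univ.image f ∧ E' = Finset.univ.image (fun i => ({f i, f (i + 1)} : Finset σ))

/-- The Mathlib (Dec 2024) meaning of `IsAssociatedPrime`: `I` is prime and equals the
annihilator of some `x : M`. -/
def IsAssociatedPrimeOld {R : Type*} [CommRing R] (I : Ideal R) (M : Type*) [AddCommGroup M]
    [Module R M] : Prop :=
  I.IsPrime ∧ ∃ x : M, I = (Submodule.span R {x}).annihilator

/- Notation (*): `H = (V, E)` is a hypergraph with `V = X ∪ {y}` where `X = V \ {y}`;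
`y` belongs to exactly one edge `e_y ∈ E`; `e := e_y \ {y}`;
`H' = (X, (E \ {e_y}) ∪ {e})` is the shadow of `H` on `X`, with edge set
`insert (ey.erase y) (H.E.erase ey)`; `H̃ = H_X` is the induced subhypergraph on `X`,
with edge set `H.E.filter (· ⊆ H.V.erase y)`.  Cover ideals of `H'` and `H̃` are taken as
(cone) ideals of the ambient ring `K[V] = MvPolynomial σ K`, generated by the same monomials
as the corresponding ideals of `K[X]`. -/

set_option linter.unusedSectionVars false
set_option maxHeartbeats 1000000
namespace Stmt15
open Finsupp Pointwise

variable {σ : Type*} [DecidableEq σ] {K : Type*} [Field K]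

def mspan (K : Type*) [Field K] (S : Set (σ →₀ ℕ)) : Ideal (MvPolynomial σ K) :=
  Ideal.span ((fun c => (monomial c (1 : K) : MvPolynomial σ K)) '' S)

def UC (S : Set (σ →₀ ℕ)) : Prop := ∀ ⦃a b : σ →₀ ℕ⦄, a ∈ S → a ≤ b → b ∈ S

lemma mem_mspan {S : Set (σ →₀ ℕ)} (hS : UC S) {f : MvPolynomial σ K} :
    f ∈ mspan K S ↔ ∀ c ∈ f.support, c ∈ S := by
  rw [mspan, mem_ideal_span_monomial_image]
  constructor
  · intro h c hc; obtain ⟨s, hs, hle⟩ := h c hc; exact hS hs hle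
  · intro h c hc; exact ⟨c, h c hc, le_rfl⟩

lemma mono_mem_mspan {S : Set (σ →₀ ℕ)} (hS : UC S) {c : σ →₀ ℕ} :
    (monomial c (1 : K) : MvPolynomial σ K) ∈ mspan K S ↔ c ∈ S := by
  rw [mem_mspan hS]
  simp [MvPolynomial.support_monomial]

lemma mspan_mono {S T : Set (σ →₀ ℕ)} (h : S ⊆ T) : mspan K S ≤ mspan K T :=
  Ideal.span_mono (Set.image_mono h)

lemma mspan_univ : mspan K (Set.univ : Set (σ →₀ ℕ)) = ⊤ := by
  rw [Ideal.eq_top_iff_one]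
  exact Ideal.subset_span ⟨0, trivial, by simp⟩

lemma mspan_sup (S T : Set (σ →₀ ℕ)) : mspan K S ⊔ mspan K T = mspan K (S ∪ T) := by
  rw [mspan, mspan, mspan, Set.image_union, Ideal.span_union]

lemma mspan_inf {S T : Set (σ →₀ ℕ)} (hS : UC S) (hT : UC T) :
    mspan K S ⊓ mspan K T = mspan K (S ∩ T) := by
  ext f
  rw [Ideal.mem_inf, mem_mspan hS, mem_mspan hT, mem_mspan (S := S ∩ T) (fun a b ha hle => ⟨hS ha.1 hle, hT ha.2 hle⟩)]
  constructor
  · rintro ⟨h1, h2⟩ c hc; exact ⟨h1 c hc, h2 c hc⟩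
  · intro h; exact ⟨fun c hc => (h c hc).1, fun c hc => (h c hc).2⟩

lemma mspan_mul (S T : Set (σ →₀ ℕ)) : mspan K S * mspan K T = mspan K (S + T) := by
  rw [mspan, mspan, mspan, Ideal.span_mul_span']
  congr 1
  ext f
  simp only [Set.mem_mul, Set.mem_image, Set.mem_add]
  constructor
  · rintro ⟨_, ⟨a, ha, rfl⟩, _, ⟨b, hb, rfl⟩, rfl⟩
    exact ⟨a + b, ⟨a, ha, b, hb, rfl⟩, by rw [monomial_mul, one_mul]⟩
  · rintro ⟨_, ⟨a, ha, b, hb, rfl⟩, rfl⟩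
    exact ⟨_, ⟨a, ha, rfl⟩, _, ⟨b, hb, rfl⟩, by rw [monomial_mul, one_mul]⟩

lemma colon_mspan {S : Set (σ →₀ ℕ)} (hS : UC S) (d : σ →₀ ℕ) :
    (mspan K S).colon (Ideal.span {(monomial d (1 : K) : MvPolynomial σ K)}) =
      mspan K {c | c + d ∈ S} := by
  have hS' : UC {c | c + d ∈ S} := fun a b ha hle => hS ha (add_le_add_left hle d)
  ext f
  rw [Ideal.mem_colon_span_singleton, mem_mspan hS, mem_mspan hS']
  constructor
  · intro h c hc
    have hmem : c + d ∈ (f * monomial d (1 : K)).support := by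
      rw [MvPolynomial.mem_support_iff, coeff_mul_monomial, mul_one]
      exact MvPolynomial.mem_support_iff.mp hc
    exact h _ hmem
  · intro h c hc
    rw [MvPolynomial.mem_support_iff, coeff_mul_monomial'] at hc
    split_ifs at hc with hle
    · rw [mul_one] at hc
      have := h _ (MvPolynomial.mem_support_iff.mpr hc)
      simp only [Set.mem_setOf_eq, tsub_add_cancel_of_le hle] at this
      exact this
    · exact absurd rfl hc


lemma UC_add {S T : Set (σ →₀ ℕ)} (hS : UC S) (hT : UC T) : UC (S + T) := by
  rintro a b ⟨x, hx, z, hz, rfl⟩ hle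
  obtain ⟨k, rfl⟩ := exists_add_of_le hle
  exact ⟨x, hx, z + k, hT hz (le_add_right le_rfl), by rw [add_assoc]⟩

lemma UC_univ : UC (Set.univ : Set (σ →₀ ℕ)) := fun _ _ _ _ => trivial

lemma UC.univ_add {S : Set (σ →₀ ℕ)} (hS : UC S) : (Set.univ : Set (σ →₀ ℕ)) + S = S := by
  ext c
  constructor
  · rintro ⟨a, -, b, hb, rfl⟩; exact hS hb (le_add_left le_rfl)
  · intro hc; exact ⟨0, trivial, c, hc, zero_add c⟩

lemma add_mem_add' {S T : Set (σ →₀ ℕ)} {a b : σ →₀ ℕ} (ha : a ∈ S) (hb : b ∈ T) :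
    a + b ∈ S + T := ⟨a, ha, b, hb, rfl⟩

def sumPow (S : Set (σ →₀ ℕ)) : ℕ → Set (σ →₀ ℕ)
  | 0 => Set.univ
  | n + 1 => S + sumPow S n

lemma UC_sumPow {S : Set (σ →₀ ℕ)} (hS : UC S) (n : ℕ) : UC (sumPow S n) := by
  induction n with
  | zero => exact UC_univ
  | succ n ih => exact UC_add hS ih

lemma sumPow_mono {S T : Set (σ →₀ ℕ)} (h : S ⊆ T) (n : ℕ) : sumPow S n ⊆ sumPow T n := by
  induction n with
  | zero => exact le_rfl
  | succ n ih => rintro c ⟨a, ha, b, hb, rfl⟩; exact ⟨a, h ha, b, ih hb, rfl⟩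

lemma sumPow_add {S : Set (σ →₀ ℕ)} (hS : UC S) (a b : ℕ) :
    sumPow S a + sumPow S b = sumPow S (a + b) := by
  induction a with
  | zero => rw [Nat.zero_add]; exact (UC_sumPow hS b).univ_add
  | succ n ih =>
      rw [show n + 1 + b = (n + b) + 1 by omega]
      show (S + sumPow S n) + sumPow S b = S + sumPow S (n + b)
      rw [add_assoc, ih]

lemma mspan_sumPow {S : Set (σ →₀ ℕ)} (n : ℕ) :
    (mspan K S) ^ n = mspan K (sumPow S n) := by
  induction n with
  | zero => rw [pow_zero, sumPow, mspan_univ, Ideal.one_eq_top]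
  | succ n ih => rw [pow_succ, ih, mul_comm, mspan_mul]; rfl

/-- `S` is insensitive to the variable `y`. -/
def Ins (y : σ) (S : Set (σ →₀ ℕ)) : Prop := ∀ c ∈ S, Finsupp.erase y c ∈ S

lemma erase_le (y : σ) (c : σ →₀ ℕ) : Finsupp.erase y c ≤ c := by
  intro v
  rcases eq_or_ne v y with rfl | h
  · simp [Finsupp.erase_same]
  · simp [Finsupp.erase_ne h]

lemma erase_eq_self {y : σ} {c : σ →₀ ℕ} (h : c y = 0) : Finsupp.erase y c = c := by
  ext v
  rcases eq_or_ne v y with rfl | hv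
  · simp [Finsupp.erase_same, h]
  · simp [Finsupp.erase_ne hv]

lemma Ins_univ (y : σ) : Ins y (Set.univ : Set (σ →₀ ℕ)) := fun _ _ => trivial

lemma Ins_add {y : σ} {S T : Set (σ →₀ ℕ)} (hS : Ins y S) (hT : Ins y T) : Ins y (S + T) := by
  rintro c ⟨a, ha, b, hb, rfl⟩
  rw [Finsupp.erase_add]
  exact add_mem_add' (hS a ha) (hT b hb)

lemma Ins_sumPow {y : σ} {S : Set (σ →₀ ℕ)} (hS : Ins y S) (n : ℕ) : Ins y (sumPow S n) := by
  induction n with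
  | zero => exact Ins_univ y
  | succ n ih => exact Ins_add hS ih

lemma Ins_inter {y : σ} {S T : Set (σ →₀ ℕ)} (hS : Ins y S) (hT : Ins y T) :
    Ins y (S ∩ T) := fun c hc => ⟨hS c hc.1, hT c hc.2⟩

lemma Ins_shift {y : σ} {S : Set (σ →₀ ℕ)} (hS : Ins y S) {d : σ →₀ ℕ} (hd : d y = 0) :
    Ins y {c | c + d ∈ S} := by
  intro c hc
  have := hS _ hc
  rwa [Finsupp.erase_add, erase_eq_self hd] at this

/-- covers of a single edge -/
def Cov1 (e : Finset σ) : Set (σ →₀ ℕ) := {c | ∃ v ∈ e, c v ≠ 0}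

def CovSet (E : Finset (Finset σ)) : Set (σ →₀ ℕ) := {c | ∀ f ∈ E, ∃ v ∈ f, c v ≠ 0}

lemma UC_Cov1 (e : Finset σ) : UC (Cov1 e) := by
  rintro a b ⟨v, hv, hav⟩ hle
  exact ⟨v, hv, fun h => hav (Nat.eq_zero_of_le_zero (h ▸ hle v))⟩

lemma UC_CovSet (E : Finset (Finset σ)) : UC (CovSet E) := by
  rintro a b ha hle f hf
  obtain ⟨v, hv, hav⟩ := ha f hf
  exact ⟨v, hv, fun h => hav (Nat.eq_zero_of_le_zero (h ▸ hle v))⟩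

lemma Ins_CovSet {y : σ} {E : Finset (Finset σ)} (hy : ∀ f ∈ E, y ∉ f) :
    Ins y (CovSet E) := by
  intro c hc f hf
  obtain ⟨v, hv, hcv⟩ := hc f hf
  refine ⟨v, hv, ?_⟩
  rwa [Finsupp.erase_ne (fun h : v = y => hy f hf (h ▸ hv))]

lemma CovSet_insert (f : Finset σ) (E : Finset (Finset σ)) :
    CovSet (insert f E) = Cov1 f ∩ CovSet E := by
  ext c
  simp only [CovSet, Cov1, Set.mem_setOf_eq, Set.mem_inter_iff, Finset.mem_insert]
  constructor
  · intro h; exact ⟨h f (Or.inl rfl), fun g hg => h g (Or.inr hg)⟩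
  · rintro ⟨h1, h2⟩ g (rfl | hg); exacts [h1, h2 g hg]

lemma primeOf_eq (e : Finset σ) : primeOf K e = mspan K (Cov1 e) := by
  apply le_antisymm
  · rw [primeOf, Ideal.span_le]
    rintro _ ⟨v, hv, rfl⟩
    rw [SetLike.mem_coe]
    show (X v : MvPolynomial σ K) ∈ mspan K (Cov1 e)
    have hX : (X v : MvPolynomial σ K) = monomial (Finsupp.single v 1) 1 := rfl
    rw [hX, mono_mem_mspan (UC_Cov1 _)]
    exact ⟨v, hv, by simp⟩
  · rw [mspan, Ideal.span_le]
    rintro _ ⟨c, ⟨v, hv, hcv⟩, rfl⟩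
    rw [SetLike.mem_coe]
    show (monomial c (1 : K) : MvPolynomial σ K) ∈ primeOf K e
    have : (monomial c (1 : K) : MvPolynomial σ K)
        = X v * monomial (c - Finsupp.single v 1) 1 := by
      have hX : (X v : MvPolynomial σ K) = monomial (Finsupp.single v 1) 1 := rfl
      rw [hX, monomial_mul, one_mul, add_tsub_cancel_of_le]
      · intro w
        rcases eq_or_ne w v with rfl | hw
        · simpa [Finsupp.single_apply] using Nat.one_le_iff_ne_zero.mpr hcv
        · simp [Finsupp.single_apply, Ne.symm hw]
    rw [this]
    exact Ideal.mul_mem_right _ _ (Ideal.subset_span ⟨v, hv, rfl⟩)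

lemma coverIdeal_eq (E : Finset (Finset σ)) : coverIdeal K E = mspan K (CovSet E) := by
  classical
  induction E using Finset.induction_on with
  | empty =>
      rw [coverIdeal]
      simp only [Finset.notMem_empty, iInf_false, iInf_top]
      have : CovSet (∅ : Finset (Finset σ)) = Set.univ := by
        ext c; simp [CovSet]
      rw [this, mspan_univ]
  | insert _ _ hfE ih =>
      rename_i f E'
      rw [coverIdeal, Finset.iInf_insert, ← coverIdeal, ih, CovSet_insert,
        ← mspan_inf (UC_Cov1 _) (UC_CovSet _), primeOf_eq]


def Yset (y : σ) : Set (σ →₀ ℕ) := {c | c y ≠ 0}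

lemma UC_Yset (y : σ) : UC (Yset y) := fun a b ha hle h =>
  ha (Nat.eq_zero_of_le_zero (h ▸ hle y))

lemma UC_inter {S T : Set (σ →₀ ℕ)} (hS : UC S) (hT : UC T) : UC (S ∩ T) :=
  fun a b ha hle => ⟨hS ha.1 hle, hT ha.2 hle⟩

lemma UC_union {S T : Set (σ →₀ ℕ)} (hS : UC S) (hT : UC T) : UC (S ∪ T) := by
  rintro a b (ha | ha) hle
  · exact Or.inl (hS ha hle)
  · exact Or.inr (hT ha hle)

lemma single_le_single {y : σ} {i j : ℕ} (h : i ≤ j) :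
    (Finsupp.single y i : σ →₀ ℕ) ≤ Finsupp.single y j := by
  intro v
  rcases eq_or_ne v y with rfl | hv
  · simpa [Finsupp.single_apply] using h
  · simp [Finsupp.single_apply, Ne.symm hv]

lemma shiftY {y : σ} {SA : Set (σ →₀ ℕ)} (hSA : UC SA) :
    ∀ i, ∀ u ∈ sumPow SA i, u + Finsupp.single y i ∈ sumPow (SA ∩ Yset y) i := by
  intro i
  induction i with
  | zero => intro u _; exact trivial
  | succ n ih =>
      rintro _ ⟨a, ha, b, hb, rfl⟩
      have h1 : a + Finsupp.single y 1 ∈ SA ∩ Yset y := by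
        refine ⟨hSA ha (le_add_right le_rfl), ?_⟩
        simp [Yset]
      have key : a + b + Finsupp.single y (n + 1)
          = (a + Finsupp.single y 1) + (b + Finsupp.single y n) := by
        rw [show (n + 1 : ℕ) = 1 + n by omega, Finsupp.single_add]
        abel
      rw [key]
      exact add_mem_add' h1 (ih b hb)

/-- The key decomposition of powers of `SC = SB ∪ (SA ∩ Yset y)`. -/
lemma sumPow_union_char {y : σ} {SA SB : Set (σ →₀ ℕ)}
    (hSA : UC SA) (hSB : UC SB) (hiSA : Ins y SA) (hiSB : Ins y SB) :
    ∀ n c, (c ∈ sumPow (SB ∪ (SA ∩ Yset y)) n ↔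
      ∃ i ≤ n, i ≤ c y ∧ Finsupp.erase y c ∈ sumPow SA i + sumPow SB (n - i)) := by
  have hSC : UC (SB ∪ (SA ∩ Yset y)) := UC_union hSB (UC_inter hSA (UC_Yset y))
  intro n
  induction n with
  | zero =>
      intro c
      constructor
      · intro _
        exact ⟨0, le_rfl, Nat.zero_le _, ⟨Finsupp.erase y c, trivial, 0, trivial, add_zero _⟩⟩
      · intro _; trivial
  | succ n ih =>
      intro c
      constructor
      · rintro ⟨a, ha, b, hb, rfl⟩
        beta_reduce
        obtain ⟨i, hin, hiy, u, hu, v, hv, huv⟩ := (ih b).mp hb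
        rcases ha with haB | ⟨haA, hay⟩
        · refine ⟨i, le_trans hin (Nat.le_succ n), ?_, ?_⟩
          · have : (a + b) y = a y + b y := Finsupp.add_apply a b y
            omega
          · rw [show n + 1 - i = (n - i) + 1 by omega]
            rw [Finsupp.erase_add, ← huv, add_left_comm]
            exact add_mem_add' hu (add_mem_add' (hiSB a haB) hv)
        · refine ⟨i + 1, by omega, ?_, ?_⟩
          · have h1 : 1 ≤ a y := Nat.one_le_iff_ne_zero.mpr hay
            have : (a + b) y = a y + b y := Finsupp.add_apply a b y
            omega
          · rw [show n + 1 - (i + 1) = n - i by omega]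
            rw [Finsupp.erase_add, ← huv, ← add_assoc]
            exact add_mem_add' (add_mem_add' (hiSA a haA) hu) hv
      · rintro ⟨i, hin, hiy, u, hu, v, hv, huv⟩
        have hw : (u + Finsupp.single y i) + v
            ∈ sumPow (SB ∪ (SA ∩ Yset y)) i + sumPow (SB ∪ (SA ∩ Yset y)) (n + 1 - i) := by
          refine add_mem_add' ?_ ?_
          · exact sumPow_mono (fun x hx => Or.inr hx) i (shiftY hSA i u hu)
          · exact sumPow_mono (fun x hx => Or.inl hx) _ hv
        rw [sumPow_add hSC, show i + (n + 1 - i) = n + 1 by omega] at hw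
        refine UC_sumPow hSC (n + 1) hw ?_
        calc (u + Finsupp.single y i) + v = (u + v) + Finsupp.single y i := by abel
          _ ≤ (u + v) + Finsupp.single y (c y) := add_le_add_right (single_le_single hiy) _
          _ = Finsupp.erase y c + Finsupp.single y (c y) := by rw [show u + v = Finsupp.erase y c from huv]
          _ = c := Finsupp.erase_add_single y c

lemma mono_factor {c : σ →₀ ℕ} {v : σ} (h : c v ≠ 0) :
    (monomial c (1 : K) : MvPolynomial σ K) = X v * monomial (c - Finsupp.single v 1) 1 := by
  have hX : (X v : MvPolynomial σ K) = monomial (Finsupp.single v 1) 1 := rfl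
  rw [hX, monomial_mul, one_mul, add_tsub_cancel_of_le]
  intro w
  rcases eq_or_ne w v with rfl | hw
  · simpa [Finsupp.single_apply] using Nat.one_le_iff_ne_zero.mpr h
  · simp [Finsupp.single_apply, Ne.symm hw]

lemma mspan_Yset (y : σ) :
    mspan K (Yset y) = Ideal.span {(X y : MvPolynomial σ K)} := by
  apply le_antisymm
  · rw [mspan, Ideal.span_le]
    rintro _ ⟨c, hc, rfl⟩
    rw [SetLike.mem_coe, Ideal.mem_span_singleton]
    exact ⟨monomial (c - Finsupp.single y 1) 1, mono_factor hc⟩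
  · rw [Ideal.span_le, Set.singleton_subset_iff, SetLike.mem_coe]
    show (X y : MvPolynomial σ K) ∈ mspan K (Yset y)
    have hX : (X y : MvPolynomial σ K) = monomial (Finsupp.single y 1) 1 := rfl
    rw [hX, mono_mem_mspan (UC_Yset y)]
    simp [Yset]


noncomputable def phi (K : Type*) [Field K] (y : σ) : MvPolynomial σ K →ₐ[K] MvPolynomial σ K :=
  aeval (fun v => if v = y then 0 else X v)

lemma phi_monomial_of_yfree {y : σ} {c : σ →₀ ℕ} (h : c y = 0) (a : K) :
    phi K y (monomial c a) = monomial c a := by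
  rw [phi, aeval_monomial]
  have h1 : (Finsupp.prod c fun n e => (if n = y then 0 else X n : MvPolynomial σ K) ^ e)
      = Finsupp.prod c fun n e => (X n : MvPolynomial σ K) ^ e := by
    refine Finsupp.prod_congr (fun v hv => ?_)
    have hne : v ≠ y := fun hvy => (Finsupp.mem_support_iff.mp hv) (hvy ▸ h)
    rw [if_neg hne]
  rw [h1, algebraMap_eq, ← monomial_eq]

lemma phi_monomial_of_y {y : σ} {c : σ →₀ ℕ} (h : c y ≠ 0) (a : K) :
    phi K y (monomial c a) = 0 := by
  rw [phi, aeval_monomial]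
  have : (Finsupp.prod c fun n e => (if n = y then 0 else X n : MvPolynomial σ K) ^ e) = 0 := by
    apply Finset.prod_eq_zero (Finsupp.mem_support_iff.mpr h)
    beta_reduce
    rw [if_pos rfl, zero_pow h]
  rw [this, mul_zero]

lemma sub_phi_mem {y : σ} (f : MvPolynomial σ K) :
    f - phi K y f ∈ Ideal.span {(X y : MvPolynomial σ K)} := by
  induction f using MvPolynomial.induction_on with
  | C a => rw [phi, aeval_C]; simp [algebraMap_eq]
  | add p q hp hq =>
      rw [map_add, ← sub_add_sub_comm]
      exact Ideal.add_mem _ hp hq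
  | mul_X p v hp =>
      rw [map_mul, phi, aeval_X, ← phi]
      rcases eq_or_ne v y with rfl | hv
      · rw [if_pos rfl, mul_zero, sub_zero]
        exact Ideal.mem_span_singleton.mpr (Dvd.intro_left p rfl)
      · rw [if_neg hv]
        have : p * X v - phi K y p * X v = (p - phi K y p) * X v := by ring
        rw [this]
        exact Ideal.mul_mem_right _ _ hp

lemma sup_X_eq_comap {y : σ} {Ts : Set (σ →₀ ℕ)} (hTs : UC Ts) (hiTs : Ins y Ts) :
    mspan K Ts ⊔ Ideal.span {(X y : MvPolynomial σ K)} = Ideal.comap (phi K y) (mspan K Ts) := by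
  apply le_antisymm
  · refine sup_le ?_ ?_
    · rw [← Ideal.map_le_iff_le_comap, mspan, Ideal.map_span]
      rw [Ideal.span_le]
      rintro _ ⟨_, ⟨c, hc, rfl⟩, rfl⟩
      rw [SetLike.mem_coe]
      rcases eq_or_ne (c y) 0 with h0 | h0
      · rw [phi_monomial_of_yfree h0]
        exact (mono_mem_mspan hTs).mpr hc
      · rw [phi_monomial_of_y h0]
        exact Ideal.zero_mem _
    · rw [Ideal.span_le, Set.singleton_subset_iff, SetLike.mem_coe, Ideal.mem_comap]
      have : phi K y (X y) = 0 := by rw [phi, aeval_X, if_pos rfl]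
      rw [this]
      exact Ideal.zero_mem _
  · intro f hf
    rw [Ideal.mem_comap] at hf
    have h1 : f - phi K y f ∈ mspan K Ts ⊔ Ideal.span {(X y : MvPolynomial σ K)} :=
      Ideal.mem_sup_right (sub_phi_mem f)
    have h2 : phi K y f ∈ mspan K Ts ⊔ Ideal.span {(X y : MvPolynomial σ K)} :=
      Ideal.mem_sup_left hf
    have := Ideal.add_mem _ h1 h2
    rwa [sub_add_cancel] at this

lemma ann_eq_colon (I : Ideal (MvPolynomial σ K)) (g : MvPolynomial σ K) :
    (Submodule.span (MvPolynomial σ K) {(Ideal.Quotient.mk I g : MvPolynomial σ K ⧸ I)}).annihilator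
      = I.colon (Ideal.span {g}) := by
  ext r
  rw [Submodule.mem_annihilator_span_singleton, Ideal.mem_colon_span_singleton]
  have hsmul : r • (Ideal.Quotient.mk I g) = Ideal.Quotient.mk I (r * g) := by
    rfl
  rw [hsmul, Ideal.Quotient.eq_zero_iff_mem]

end Stmt15

open Stmt15

open Pointwise

/-- Under Notation (*): if `(J(H')^s : m) = p` and `(J(H̃)^s : m) ≠ p`, then
there is a monomial `m₀ ∉ p` with `(J(H)^s : m·m₀) = p + (y)`; in particular `p + (y)` is an
associated prime of `J(H)^s`. -/
theorem exists_monomial_colon_eq_sup_y {σ K : Type*} [DecidableEq σ] [Field K]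
    (H : SimpleHypergraph σ) (y : σ) (ey : Finset σ)
    (hyV : y ∈ H.V) (heyE : ey ∈ H.E) (hyey : y ∈ ey)
    (huniq : ∀ f ∈ H.E, y ∈ f → f = ey)
    (s : ℕ) (d : σ →₀ ℕ) (hd : d.support ⊆ H.V.erase y)
    (p : Ideal (MvPolynomial σ K)) (hp : p.IsPrime)
    (hcolon : ((coverIdeal K (insert (ey.erase y) (H.E.erase ey))) ^ s).colon
        (Ideal.span {(monomial d (1 : K) : MvPolynomial σ K)}) = p)
    (hne : ((coverIdeal K (H.E.filter (fun f => f ⊆ H.V.erase y))) ^ s).colon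
        (Ideal.span {(monomial d (1 : K) : MvPolynomial σ K)}) ≠ p) :
    (∃ c : σ →₀ ℕ, (monomial c (1 : K) : MvPolynomial σ K) ∉ p ∧
        ((coverIdeal K H.E) ^ s).colon
          (Ideal.span {(monomial d (1 : K) * monomial c (1 : K) : MvPolynomial σ K)}) =
          p ⊔ Ideal.span {(X y : MvPolynomial σ K)}) ∧
      IsAssociatedPrimeOld (p ⊔ Ideal.span {(X y : MvPolynomial σ K)})
        (MvPolynomial σ K ⧸ (coverIdeal K H.E) ^ s) := by
  classical
  -- dispose of the degenerate case `s = 0`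
  rcases Nat.eq_zero_or_pos s with rfl | hs
  · exfalso
    apply hp.ne_top
    rw [← hcolon, pow_zero, Ideal.one_eq_top]
    exact eq_top_iff.mpr (fun x _ => Ideal.mem_colon_span_singleton.mpr trivial)
  -- basic facts about `y`
  have hyne : ∀ f ∈ H.E.erase ey, y ∉ f := fun f hf hyf =>
    (Finset.ne_of_mem_erase hf) (huniq f (Finset.mem_of_mem_erase hf) hyf)
  have hdy : d y = 0 := by
    by_contra h
    exact (Finset.mem_erase.mp (hd (Finsupp.mem_support_iff.mpr h))).1 rfl
  have hfilter : H.E.filter (fun f => f ⊆ H.V.erase y) = H.E.erase ey := by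
    ext f
    simp only [Finset.mem_filter, Finset.mem_erase]
    constructor
    · rintro ⟨hfE, hsub⟩
      refine ⟨fun hfey => ?_, hfE⟩
      subst hfey
      exact (Finset.mem_erase.mp (hsub hyey)).1 rfl
    · rintro ⟨hfne, hfE⟩
      refine ⟨hfE, fun v hv => Finset.mem_erase.mpr ⟨?_, H.edge_sub f hfE hv⟩⟩
      rintro rfl
      exact hfne (huniq f hfE hv)
  set SA := CovSet (H.E.erase ey) with hSAdef
  set SB := CovSet (insert (ey.erase y) (H.E.erase ey)) with hSBdef
  have hUA : UC SA := UC_CovSet _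
  have hUB : UC SB := UC_CovSet _
  have hiA : Ins y SA := Ins_CovSet hyne
  have hiB : Ins y SB := by
    refine Ins_CovSet (fun f hf => ?_)
    rcases Finset.mem_insert.mp hf with rfl | hf'
    · exact Finset.notMem_erase y ey
    · exact hyne f hf'
  have hBA : SB ⊆ SA := fun c hc f hf => hc f (Finset.mem_insert_of_mem hf)
  -- the edge set of `H` decomposes
  have hCov1 : Cov1 ey = Cov1 (ey.erase y) ∪ Yset y := by
    ext c
    simp only [Cov1, Yset, Set.mem_setOf_eq, Set.mem_union]
    constructor
    · rintro ⟨v, hv, hcv⟩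
      rcases eq_or_ne v y with rfl | hvy
      · exact Or.inr hcv
      · exact Or.inl ⟨v, Finset.mem_erase.mpr ⟨hvy, hv⟩, hcv⟩
    · rintro (⟨v, hv, hcv⟩ | hcy)
      · exact ⟨v, Finset.mem_of_mem_erase hv, hcv⟩
      · exact ⟨y, hyey, hcy⟩
  have hSC : CovSet H.E = SB ∪ (SA ∩ Yset y) := by
    conv_lhs => rw [show H.E = insert ey (H.E.erase ey) from (Finset.insert_erase heyE).symm]
    rw [CovSet_insert, hCov1, Set.union_inter_distrib_right, hSBdef, CovSet_insert,
      Set.inter_comm (Yset y) SA]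
  have hUC' : UC (SB ∪ (SA ∩ Yset y)) := UC_union hUB (UC_inter hUA (UC_Yset y))
  -- translate the two colon hypotheses
  rw [coverIdeal_eq, mspan_sumPow, colon_mspan (UC_sumPow hUB s)] at hcolon
  rw [hfilter, coverIdeal_eq, mspan_sumPow, colon_mspan (UC_sumPow hUA s)] at hne
  set Ts := {c : σ →₀ ℕ | c + d ∈ sumPow SB s} with hTsdef
  set Us := {c : σ →₀ ℕ | c + d ∈ sumPow SA s} with hUsdef
  have hUTs : UC Ts := fun a b ha hle => UC_sumPow hUB s ha (add_le_add_left hle d)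
  have hiTs : Ins y Ts := Ins_shift (Ins_sumPow hiB s) hdy
  -- find a monomial in the colon of the induced subhypergraph, outside `p`
  have hsub : Ts ⊆ Us := fun c hc => sumPow_mono hBA s hc
  have hple : p ≤ mspan K Us := hcolon ▸ mspan_mono hsub
  have hnotle : ¬ mspan K Us ≤ p := fun hle2 => hne (le_antisymm hle2 hple)
  have hex : ∃ c ∈ Us, (monomial c (1 : K) : MvPolynomial σ K) ∉ p := by
    by_contra h
    push_neg at h
    apply hnotle
    rw [mspan, Ideal.span_le]
    rintro _ ⟨c, hc, rfl⟩
    exact h c hc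
  obtain ⟨cw, hcwUs, hcwp⟩ := hex
  have hc1Us : Finsupp.erase y cw ∈ Us := Ins_shift (Ins_sumPow hiA s) hdy cw hcwUs
  have hc1Ts : Finsupp.erase y cw ∉ Ts := by
    intro h
    exact hcwp (hcolon ▸ (mono_mem_mspan hUTs).mpr (hUTs h (erase_le y cw)))
  -- the maximal witness
  set Wit : ℕ → Prop := fun j => ∃ w : σ →₀ ℕ, w y = 0 ∧ w ∉ Ts ∧
    w + d ∈ sumPow SA (s - j) + sumPow SB j with hWitdef
  have hW0 : Wit 0 := by
    refine ⟨Finsupp.erase y cw, Finsupp.erase_same, hc1Ts, ?_⟩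
    rw [Nat.sub_zero]
    exact ⟨Finsupp.erase y cw + d, hc1Us, 0, trivial, add_zero _⟩
  set j := Nat.findGreatest Wit s with hjdef
  have hWj : Wit j := Nat.findGreatest_spec (Nat.zero_le s) hW0
  have hjle : j ≤ s := Nat.findGreatest_le s
  have hjmax : ∀ k, j < k → k ≤ s → ¬ Wit k := fun k h1 h2 =>
    Nat.findGreatest_is_greatest h1 h2
  have hjs : j < s := by
    rcases Nat.lt_or_ge j s with h | h
    · exact h
    · exfalso
      have hjs' : j = s := le_antisymm hjle h
      obtain ⟨w, hwy, hwTs, hwmem⟩ := hWj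
      rw [hjs', Nat.sub_self] at hwmem
      apply hwTs
      show w + d ∈ sumPow SB s
      rw [← (UC_sumPow hUB s).univ_add]
      exact hwmem
  obtain ⟨m1, hm1y, hm1Ts, hm1mem⟩ := hWj
  set t := s - 1 - j with htdef
  set c0 := m1 + Finsupp.single y t with hc0def
  have hm1p : (monomial m1 (1 : K) : MvPolynomial σ K) ∉ p := fun h =>
    hm1Ts (by rwa [← hcolon, mono_mem_mspan hUTs] at h)
  have hc0p : (monomial c0 (1 : K) : MvPolynomial σ K) ∉ p := by
    intro h
    rw [← hcolon, mono_mem_mspan hUTs] at h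
    have h2 := hiTs _ h
    rw [hc0def, Finsupp.erase_add, erase_eq_self hm1y, Finsupp.erase_single, add_zero] at h2
    exact hm1Ts h2
  -- the key colon computation
  have hkey : ((coverIdeal K H.E) ^ s).colon
      (Ideal.span {(monomial d (1 : K) * monomial c0 (1 : K) : MvPolynomial σ K)}) =
      p ⊔ Ideal.span {(X y : MvPolynomial σ K)} := by
    have hmm : (monomial d (1 : K) * monomial c0 (1 : K) : MvPolynomial σ K)
        = monomial (d + c0) (1 : K) := by rw [monomial_mul, one_mul]
    rw [hmm, coverIdeal_eq, hSC, mspan_sumPow, colon_mspan (UC_sumPow hUC' s),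
      ← hcolon, ← mspan_Yset y, mspan_sup]
    congr 1
    ext u
    simp only [Set.mem_setOf_eq, Set.mem_union]
    constructor
    · intro hu
      by_cases huy : u y = 0
      · left
        obtain ⟨i, his, hiy, hmem⟩ := (sumPow_union_char hUA hUB hiA hiB s _).mp hu
        have hval : (u + (d + c0)) y = t := by
          simp [Finsupp.add_apply, Finsupp.single_eq_same, huy, hdy, hm1y, hc0def]
        rw [hval] at hiy
        have hE2 : Finsupp.erase y (u + (d + c0)) = u + (d + m1) := by
          rw [hc0def, Finsupp.erase_add, Finsupp.erase_add, Finsupp.erase_add,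
            erase_eq_self huy, erase_eq_self hdy, erase_eq_self hm1y,
            Finsupp.erase_single, add_zero]
        rw [hE2] at hmem
        have hum1 : u + m1 ∈ Ts := by
          by_contra hno
          refine hjmax (s - i) (by omega) (by omega) ⟨u + m1, ?_, hno, ?_⟩
          · rw [Finsupp.add_apply, huy, hm1y]
          · rw [show s - (s - i) = i from by omega, show u + m1 + d = u + (d + m1) from by
              rw [add_assoc, add_comm m1 d]]
            exact hmem
        have hmon : (monomial (u + m1) (1 : K) : MvPolynomial σ K) ∈ p :=
          hcolon ▸ (mono_mem_mspan hUTs).mpr hum1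
        have hmul : (monomial u (1 : K) : MvPolynomial σ K) * monomial m1 1
            = monomial (u + m1) 1 := by rw [monomial_mul, one_mul]
        have hu2 : (monomial u (1 : K) : MvPolynomial σ K) ∈ p :=
          (hp.mem_or_mem (hmul ▸ hmon)).resolve_right hm1p
        rwa [← hcolon, mono_mem_mspan hUTs] at hu2
      · exact Or.inr huy
    · rintro (hu | hu)
      · have h1 : u + d ∈ sumPow (SB ∪ (SA ∩ Yset y)) s :=
          sumPow_mono (fun x hx => Or.inl hx) s hu
        refine UC_sumPow hUC' s h1 ?_
        rw [← add_assoc]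
        exact le_add_right le_rfl
      · refine (sumPow_union_char hUA hUB hiA hiB s _).mpr ⟨s - j, by omega, ?_, ?_⟩
        · have hval : (u + (d + c0)) y = u y + t := by
            simp [Finsupp.add_apply, Finsupp.single_eq_same, hdy, hm1y, hc0def]
          have h1 : 1 ≤ u y := Nat.one_le_iff_ne_zero.mpr hu
          omega
        · have hE1 : Finsupp.erase y (u + (d + c0)) = Finsupp.erase y u + (d + m1) := by
            rw [hc0def, Finsupp.erase_add, Finsupp.erase_add, Finsupp.erase_add,
              erase_eq_self hdy, erase_eq_self hm1y, Finsupp.erase_single, add_zero]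
          rw [hE1, show s - (s - j) = j from by omega]
          have h2 : d + m1 ∈ sumPow SA (s - j) + sumPow SB j := by
            rw [add_comm d m1]; exact hm1mem
          exact UC_add (UC_sumPow hUA _) (UC_sumPow hUB _) h2 le_add_self
  refine ⟨⟨c0, hc0p, hkey⟩, ?_, ?_⟩
  · rw [← hcolon, sup_X_eq_comap hUTs hiTs]
    haveI : (mspan K Ts).IsPrime := hcolon.symm ▸ hp
    exact Ideal.IsPrime.comap _
  · refine ⟨Ideal.Quotient.mk _ (monomial d (1 : K) * monomial c0 (1 : K)), ?_⟩
    rw [ann_eq_colon, hkey]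
end
end

section
/- Under Notation (*): if (J(H')^s : m) = p is prime and p_e ⊄ p (the prime of the edge e is not contained in p), then (J(H)^s : m) = p. -/
open MvPolynomial

noncomputable section

/- Notation (*): `H = (V, E)` is a hypergraph with `V = X ∪ {y}` where `X = V \ {y}`;
`y` belongs to exactly one edge `e_y ∈ E`; `e := e_y \ {y}`;
`H' = (X, (E \ {e_y}) ∪ {e})` is the shadow of `H` on `X`, with edge set
`insert (ey.erase y) (H.E.erase ey)`; `H̃ = H_X` is the induced subhypergraph on `X`,
with edge set `H.E.filter (· ⊆ H.V.erase y)`.  Cover ideals of `H'` and `H̃` are taken as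
(cone) ideals of the ambient ring `K[V] = MvPolynomial σ K`, generated by the same monomials
as the corresponding ideals of `K[X]`. -/

/-- Under Notation (*): if `(J(H')^s : m) = p` is prime and `p_e ⊄ p`, then
`(J(H)^s : m) = p`. -/
theorem colon_eq_of_prime_edge_not_le {σ K : Type*} [DecidableEq σ] [Field K]
    (H : SimpleHypergraph σ) (y : σ) (ey : Finset σ)
    (hyV : y ∈ H.V) (heyE : ey ∈ H.E) (hyey : y ∈ ey)
    (huniq : ∀ f ∈ H.E, y ∈ f → f = ey)
    (s : ℕ) (d : σ →₀ ℕ) (hd : d.support ⊆ H.V.erase y)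
    (p : Ideal (MvPolynomial σ K)) (hp : p.IsPrime)
    (hcolon : ((coverIdeal K (insert (ey.erase y) (H.E.erase ey))) ^ s).colon
        (Ideal.span {(monomial d (1 : K) : MvPolynomial σ K)}) = p)
    (hnle : ¬ primeOf K (ey.erase y) ≤ p) :
    ((coverIdeal K H.E) ^ s).colon
        (Ideal.span {(monomial d (1 : K) : MvPolynomial σ K)}) = p := by
  set m : MvPolynomial σ K := monomial d (1 : K) with hm
  obtain ⟨v, hve, hvp⟩ : ∃ v ∈ ey.erase y, (X v : MvPolynomial σ K) ∉ p := by
    by_contra h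
    push_neg at h
    refine hnle (Ideal.span_le.2 ?_)
    rintro _ ⟨w, hw, rfl⟩
    exact h w (by exact_mod_cast hw)
  -- J(H') ≤ J(H)
  have hJle : coverIdeal K (insert (ey.erase y) (H.E.erase ey)) ≤ coverIdeal K H.E := by
    intro g hg
    simp only [coverIdeal, Ideal.mem_iInf] at hg ⊢
    intro f hf
    by_cases hfe : f = ey
    · rw [hfe]
      have h1 := hg (ey.erase y) (Finset.mem_insert_self _ _)
      refine Ideal.span_mono (Set.image_mono ?_) h1
      exact_mod_cast Finset.erase_subset _ _
    · exact hg f (Finset.mem_insert_of_mem (Finset.mem_erase.2 ⟨hfe, hf⟩))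
  -- X v * J(H) ≤ J(H')
  have hXv : Ideal.span {(X v : MvPolynomial σ K)} * coverIdeal K H.E ≤
      coverIdeal K (insert (ey.erase y) (H.E.erase ey)) := by
    rw [Ideal.mul_le]
    intro a ha b hb
    simp only [coverIdeal, Ideal.mem_iInf] at hb ⊢
    intro f hf
    rcases Finset.mem_insert.1 hf with rfl | hf
    · have hX : (X v : MvPolynomial σ K) ∈ primeOf K (ey.erase y) :=
        Ideal.subset_span ⟨v, by exact_mod_cast hve, rfl⟩
      obtain ⟨c, rfl⟩ := Ideal.mem_span_singleton'.1 ha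
      exact Ideal.mul_mem_right _ _ (Ideal.mul_mem_left _ _ hX)
    · exact Ideal.mul_mem_left _ _ (hb f (Finset.mem_erase.1 hf).2)
  apply le_antisymm
  · -- (J(H)^s : m) ≤ p
    intro g hg
    rw [Ideal.mem_colon_span_singleton] at hg
    have key : (X v : MvPolynomial σ K) ^ s * (g * m) ∈
        (coverIdeal K (insert (ey.erase y) (H.E.erase ey))) ^ s := by
      have h1 : (X v : MvPolynomial σ K) ^ s * (g * m) ∈
          (Ideal.span {(X v : MvPolynomial σ K)} * coverIdeal K H.E) ^ s := by
        rw [mul_pow, Ideal.span_singleton_pow]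
        exact Ideal.mul_mem_mul (Ideal.mem_span_singleton_self _) hg
      exact Ideal.pow_right_mono hXv _ h1
    have hmem : (X v : MvPolynomial σ K) ^ s * g ∈ p := by
      rw [← hcolon, Ideal.mem_colon_span_singleton, mul_assoc]
      exact key
    rcases hp.mem_or_mem hmem with h | h
    · exact absurd (hp.mem_of_pow_mem s h) hvp
    · exact h
  · -- p ≤ (J(H)^s : m)
    intro g hg
    rw [← hcolon, Ideal.mem_colon_span_singleton] at hg
    rw [Ideal.mem_colon_span_singleton]
    exact Ideal.pow_right_mono hJle _ hg
end
end
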